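/- Let H be a multigraph with at least 3 edges, G = L(H) its line graph, and let e1, e2 be edges of H corresponding to vertices a1, a2 of G. Then G has a hamiltonian path with endpoints a1 and a2 if and only if H has an internally dominating (e1,e2)-trail. -/

import Mathlib

/-- A multigraph on vertex type `V` with edge type `E`: each edge is assigned an
unordered pair of endpoints (possibly equal, for loops). -/
structure Multigraph (V : Type*) (E : Type*) where
  inc : E → Sym2 V

namespace Multigraph

open scoped Classical

variable {V E : Type*} {M : Multigraph V E}

/-- Walks in a multigraph. -/
inductive Walk (M : Multigraph V E) : V → V → Type _ where
  | nil (v : V) : Walk M v v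
  | cons {u v w : V} (e : E) (h : M.inc e = s(u, v)) (p : Walk M v w) : Walk M u w

/-- The list of edges of a walk. -/
def Walk.edges : ∀ {u v : V}, M.Walk u v → List E
  | _, _, .nil _ => []
  | _, _, .cons e _ p => e :: p.edges

/-- The list of vertices visited by a walk, in order. -/
def Walk.support : ∀ {u v : V}, M.Walk u v → List V
  | _, v, .nil _ => [v]
  | u, _, .cons _ _ p => u :: p.support

/-- A trail is a walk with no repeated edge. -/
def Walk.IsTrail {u v : V} (p : M.Walk u v) : Prop := p.edges.Nodup

/-- The interior vertices of a walk (all vertices except the two ends). -/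
def Walk.interior {u v : V} (p : M.Walk u v) : List V := p.support.tail.dropLast

/-- Two vertices are reachable if joined by a walk. -/
def Reachable (M : Multigraph V E) (u v : V) : Prop := Nonempty (M.Walk u v)

/-- Reachability avoiding a set `R` of edges. -/
def ReachableOff (M : Multigraph V E) (R : Set E) (u v : V) : Prop :=
  ∃ p : M.Walk u v, ∀ e ∈ p.edges, e ∉ R

/-- A multigraph is connected if every two vertices are joined by a walk. -/
def Connected (M : Multigraph V E) : Prop := ∀ u v : V, M.Reachable u v

/-- A multigraph is `k`-edge-connected if it stays connected after the removal of
any set of fewer than `k` edges. -/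
def KEdgeConnected (M : Multigraph V E) (k : ℕ) : Prop :=
  ∀ R : Finset E, R.card < k → ∀ u v : V, M.ReachableOff (↑R) u v

/-- An edge-cut `R` is essential if after its removal two remaining edges lie in
different components. -/
def IsEssentialCut (M : Multigraph V E) (R : Finset E) : Prop :=
  ∃ (e f : E) (u v : V), e ∉ R ∧ f ∉ R ∧ u ∈ M.inc e ∧ v ∈ M.inc f ∧
    ¬ M.ReachableOff (↑R) u v

/-- A multigraph is essentially `k`-edge-connected if every essential edge-cut has
size at least `k`. -/
def EssentiallyKEdgeConnected (M : Multigraph V E) (k : ℕ) : Prop :=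
  ∀ R : Finset E, M.IsEssentialCut R → k ≤ R.card

/-- The line graph of a multigraph: vertices are the edges, adjacent when sharing
an endpoint. -/
def lineGraph (M : Multigraph V E) : SimpleGraph E where
  Adj e f := e ≠ f ∧ ∃ v : V, v ∈ M.inc e ∧ v ∈ M.inc f
  symm := by
    refine ⟨?_⟩
    rintro e f ⟨hne, v, hv1, hv2⟩
    exact ⟨hne.symm, v, hv2, hv1⟩
  loopless := by refine ⟨?_⟩; rintro e ⟨hne, -⟩; exact hne rfl

/-- The degree of a vertex: the number of edge-ends at it (loops count twice). -/
noncomputable def degree (M : Multigraph V E) [Fintype E] (v : V) : ℕ :=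
  ∑ e : E, Sym2.lift ⟨fun a b => (if a = v then 1 else 0) + (if b = v then 1 else 0),
    fun a b => by ring⟩ (M.inc e)

/-- A pendant edge: an edge with an endpoint of degree `1`. -/
def IsPendant (M : Multigraph V E) [Fintype E] (e : E) : Prop :=
  ∃ v : V, v ∈ M.inc e ∧ M.degree v = 1

/-- A closed trail whose vertex set dominates every edge. -/
def HasDominatingClosedTrail (M : Multigraph V E) : Prop :=
  ∃ (v : V) (p : M.Walk v v), p.IsTrail ∧
    ∀ e : E, ∃ x : V, x ∈ M.inc e ∧ x ∈ p.support

/-- A closed trail through every vertex. -/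
def HasSpanningClosedTrail (M : Multigraph V E) : Prop :=
  ∃ (v : V) (p : M.Walk v v), p.IsTrail ∧ ∀ x : V, x ∈ p.support

/-- An internally dominating `(e₁,e₂)`-trail: a trail with first edge `e₁` and last
edge `e₂` whose interior vertices dominate every edge. -/
def HasIDT (M : Multigraph V E) (e₁ e₂ : E) : Prop :=
  ∃ (u v : V) (p : M.Walk u v), p.IsTrail ∧
    p.edges.head? = some e₁ ∧ p.edges.getLast? = some e₂ ∧
    ∀ e : E, ∃ x : V, x ∈ M.inc e ∧ x ∈ p.interior

end Multigraph

namespace Multigraph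

variable {V E : Type*} {M : Multigraph V E}

private lemma glc {α : Type*} {l : List α} (h : l ≠ []) (a : α) :
    (a :: l).getLast? = l.getLast? := by
  cases l with
  | nil => exact absurd rfl h
  | cons b t => exact List.getLast?_cons_cons ..

private lemma mem_of_getLast? {α : Type*} {l : List α} {a : α} (h : l.getLast? = some a) :
    a ∈ l := by
  obtain ⟨hne, rfl⟩ := List.mem_getLast?_eq_getLast h
  exact List.getLast_mem hne

lemma Walk.support_ne_nil' : ∀ {u v : V} (p : M.Walk u v), p.support ≠ []
  | _, _, .nil _ => by simp [Walk.support]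
  | _, _, .cons e h q => by simp [Walk.support]

lemma Walk.support_of_edges_nil : ∀ {u v : V} (p : M.Walk u v), p.edges = [] → p.support = [v]
  | _, _, .nil v => fun _ => rfl
  | _, _, .cons e h q => by simp [Walk.edges]

lemma Walk.dropLast_support_cons {u v w : V} (e : E) (h : M.inc e = s(u, v)) (q : M.Walk v w) :
    (Walk.cons e h q).support.dropLast = u :: q.support.dropLast := by
  obtain ⟨a, t, ht⟩ := List.exists_cons_of_ne_nil q.support_ne_nil'
  simp [Walk.support, ht]

lemma Walk.start_mem_dropLast : ∀ {u v : V} (p : M.Walk u v), p.edges ≠ [] →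
    u ∈ p.support.dropLast
  | _, _, .nil _ => by simp [Walk.edges]
  | u, _, .cons e h q => fun _ => by
      rw [Walk.dropLast_support_cons]; exact List.mem_cons_self

open scoped Classical in
lemma core_forward (M : Multigraph V E) (rest : List E) :
    ∀ (f : E) (v : V), (f :: rest).Chain' (M.lineGraph).Adj → v ∈ M.inc f →
    ∃ (w : V) (p : M.Walk v w), p.edges.Sublist (f :: rest) ∧
      p.edges.getLast? = (f :: rest).getLast? ∧
      ∀ e ∈ f :: rest, ∃ x, x ∈ M.inc e ∧ x ∈ p.support.dropLast := by
  induction rest with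
  | nil =>
    intro f v _ hv
    obtain ⟨u, hu⟩ := Sym2.mem_iff_exists.1 hv
    refine ⟨u, .cons f hu (.nil u), by simp [Walk.edges], rfl, ?_⟩
    intro e he
    simp only [List.mem_singleton] at he
    subst he
    exact ⟨v, hv, by simp [Walk.support]⟩
  | cons g rest' ih =>
    intro f v hchain hv
    have hadj : (M.lineGraph).Adj f g := (List.isChain_cons_cons.1 hchain).1
    have hchain' := (List.isChain_cons_cons.1 hchain).2
    obtain ⟨u, hu⟩ := Sym2.mem_iff_exists.1 hv
    by_cases hug : u ∈ M.inc g
    · obtain ⟨w, p, hsub, hlast, hdom⟩ := ih g u hchain' hug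
      have hpe : p.edges ≠ [] := by
        intro h0; rw [h0, List.getLast?_eq_getLast_of_ne_nil (List.cons_ne_nil g rest')] at hlast; simp at hlast
      refine ⟨w, .cons f hu p, List.Sublist.cons₂ _ hsub, ?_, ?_⟩
      · show (f :: p.edges).getLast? = _
        rw [glc hpe, hlast, glc (l := g :: rest') (by simp)]
      · intro e he
        rcases List.mem_cons.1 he with rfl | he'
        · exact ⟨v, hv, by rw [Walk.dropLast_support_cons]; exact List.mem_cons_self⟩
        · obtain ⟨x, hx1, hx2⟩ := hdom e he'
          exact ⟨x, hx1, by rw [Walk.dropLast_support_cons]; exact List.mem_cons_of_mem _ hx2⟩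
    · have hvg : v ∈ M.inc g := by
        obtain ⟨hne, y, hyf, hyg⟩ := hadj
        rw [hu, Sym2.mem_iff] at hyf
        rcases hyf with rfl | rfl
        · exact hyg
        · exact absurd hyg hug
      obtain ⟨w, p, hsub, hlast, hdom⟩ := ih g v hchain' hvg
      have hpe : p.edges ≠ [] := by
        intro h0; rw [h0, List.getLast?_eq_getLast_of_ne_nil (List.cons_ne_nil g rest')] at hlast; simp at hlast
      refine ⟨w, p, hsub.cons _, ?_, ?_⟩
      · rw [hlast, glc (l := g :: rest') (by simp)]
      · intro e he
        rcases List.mem_cons.1 he with rfl | he'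
        · exact ⟨v, hv, p.start_mem_dropLast hpe⟩
        · exact hdom e he'
open scoped Classical in
lemma core_reverse (M : Multigraph V E) {u v : V} (p : M.Walk u v) :
    ∀ (X : List E), p.edges ≠ [] →
    (∀ e ∈ X, ∃ x, x ∈ M.inc e ∧ x ∈ p.support.dropLast) →
    (p.edges ++ X).Nodup →
    ∃ L : List E, L.Perm (p.edges ++ X) ∧ L.Chain' (M.lineGraph).Adj ∧
      L.getLast? = p.edges.getLast? ∧ ∃ f, L.head? = some f ∧ u ∈ M.inc f := by
  induction p with
  | nil w => intro X h; exact absurd rfl h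
  | @cons u v w e h q ih =>
    intro X hne hdom hnd
    have hue : u ∈ M.inc e := by rw [h]; exact Sym2.mem_mk_left u v
    have hpe : (Walk.cons e h q).edges = e :: q.edges := rfl
    have hnd' : (e :: (q.edges ++ X)).Nodup := by simpa [hpe] using hnd
    have henotin : e ∉ q.edges ++ X := (List.nodup_cons.1 hnd').1
    have hXnd : X.Nodup := ((List.nodup_append.1 (List.nodup_cons.1 hnd').2)).2.1
    by_cases hq : q.edges = []
    · -- all of X touches u
      have hXu : ∀ e' ∈ X, u ∈ M.inc e' := by
        intro e' he'
        obtain ⟨x, hx1, hx2⟩ := hdom e' he'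
        have : (Walk.cons e h q).support.dropLast = [u] := by
          rw [Walk.dropLast_support_cons, q.support_of_edges_nil hq]
          rfl
        rw [this, List.mem_singleton] at hx2
        exact hx2 ▸ hx1
      refine ⟨X ++ [e], ?_, ?_, ?_, ?_⟩
      · rw [hpe, hq]
        exact List.perm_append_comm
      · unfold List.Chain'; rw [List.isChain_append]
        refine ⟨?_, List.isChain_singleton e, ?_⟩
        · refine List.Pairwise.isChain (List.Pairwise.imp_of_mem ?_ hXnd)
          intro a b ha hb hab
          exact ⟨hab, u, hXu a ha, hXu b hb⟩
        · intro x hx y hy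
          obtain rfl : e = y := by simpa using hy
          have hxX : x ∈ X := mem_of_getLast? hx
          exact ⟨fun h' => henotin (List.mem_append_right _ (h' ▸ hxX)), u, hXu x hxX, hue⟩
      · rw [List.getLast?_concat, hpe, hq]; simp
      · cases X with
        | nil => exact ⟨e, rfl, hue⟩
        | cons a t => exact ⟨a, rfl, hXu a (List.mem_cons_self)⟩
    · -- split X
      obtain ⟨A, hA⟩ : ∃ A, A = X.filter (fun e' => decide (u ∈ M.inc e')) := ⟨_, rfl⟩
      obtain ⟨B, hB⟩ : ∃ B, B = X.filter (fun e' => !decide (u ∈ M.inc e')) := ⟨_, rfl⟩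
      have hABperm : (A ++ B).Perm X := by
        rw [hA, hB]; exact List.filter_append_perm _ X
      have hAu : ∀ a ∈ A, u ∈ M.inc a := by
        intro a ha
        rw [hA] at ha
        simpa using (List.mem_filter.1 ha).2
      have hBu : ∀ b ∈ B, u ∉ M.inc b := by
        intro b hb
        rw [hB] at hb
        simpa using (List.mem_filter.1 hb).2
      have hBX : B.Sublist X := hB ▸ List.filter_sublist (l := X)
      have hAX : A.Sublist X := hA ▸ List.filter_sublist (l := X)
      have hdomB : ∀ e' ∈ B, ∃ x, x ∈ M.inc e' ∧ x ∈ q.support.dropLast := by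
        intro e' he'
        obtain ⟨x, hx1, hx2⟩ := hdom e' (hBX.subset he')
        rw [Walk.dropLast_support_cons, List.mem_cons] at hx2
        rcases hx2 with rfl | hx2
        · exact absurd hx1 (hBu e' he')
        · exact ⟨x, hx1, hx2⟩
      have hndqB : (q.edges ++ B).Nodup :=
        ((hBX.append_left q.edges).nodup (List.nodup_cons.1 hnd').2)
      obtain ⟨Lq, hperm, hchain, hlast, f, hhead, hvf⟩ := ih B hq hdomB hndqB
      have hLqne : Lq ≠ [] := by
        intro h0; subst h0; simp at hhead
      have hqlast : q.edges.getLast? = (Walk.cons e h q).edges.getLast? := by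
        rw [hpe, glc hq]
      refine ⟨A ++ e :: Lq, ?_, ?_, ?_, ?_⟩
      · -- permutation
        have h1 : (A ++ Lq).Perm (q.edges ++ (A ++ B)) := by
          refine ((hperm.append_left A)).trans ?_
          have h2 : (A ++ (q.edges ++ B)).Perm ((q.edges ++ B) ++ A) := List.perm_append_comm
          rw [List.append_assoc] at h2
          exact h2.trans ((List.perm_append_comm (l₁ := B) (l₂ := A)).append_left q.edges)
        have h3 : (A ++ Lq).Perm (q.edges ++ X) := h1.trans (hABperm.append_left q.edges)
        have h4 : (A ++ e :: Lq).Perm (e :: (A ++ Lq)) := List.perm_middle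
        rw [hpe]
        exact h4.trans (h3.cons e)
      · unfold List.Chain'; rw [List.isChain_append]
        refine ⟨?_, ?_, ?_⟩
        · refine List.Pairwise.isChain (List.Pairwise.imp_of_mem ?_ (hAX.nodup hXnd))
          intro a b ha hb hab
          exact ⟨hab, u, hAu a ha, hAu b hb⟩
        · rw [List.isChain_cons]
          refine ⟨?_, hchain⟩
          intro b hb
          obtain rfl : f = b := by rw [hhead] at hb; simpa using hb
          have hfmem : f ∈ q.edges ++ X := by
            have : f ∈ Lq := by
              cases Lq with
              | nil => simp at hhead
              | cons a t => exact (by simpa using hhead) ▸ List.mem_cons_self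
            have := hperm.subset this
            rcases List.mem_append.1 this with h1 | h1
            · exact List.mem_append_left _ h1
            · exact List.mem_append_right _ (hBX.subset h1)
          refine ⟨fun h' => henotin (h' ▸ hfmem), v, ?_, hvf⟩
          rw [h]; exact Sym2.mem_mk_right u v
        · intro x hx y hy
          obtain rfl : e = y := by simpa using hy
          have hxA : x ∈ A := mem_of_getLast? hx
          refine ⟨fun h' => henotin (h' ▸ List.mem_append_right _ (hAX.subset hxA)), u,
            hAu x hxA, hue⟩
      · rw [List.getLast?_append_of_ne_nil _ (List.cons_ne_nil e Lq), glc hLqne, hlast, hqlast]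
      · cases A with
        | nil => exact ⟨e, rfl, hue⟩
        | cons a t => exact ⟨a, rfl, hAu a (List.mem_cons_self)⟩
end Multigraph
private lemma walk_of_chain {α : Type*} {G : SimpleGraph α} :
    ∀ (L : List α) (a b : α), L.Chain' G.Adj → L.head? = some a → L.getLast? = some b →
      ∃ p : G.Walk a b, p.support = L
  | [], a, b => by simp
  | [x], a, b => by
    intro _ hh hl
    obtain rfl : x = a := by simpa using hh
    obtain rfl : x = b := by simpa using hl
    exact ⟨.nil, rfl⟩
  | x :: y :: t, a, b => by
    intro hc hh hl
    obtain rfl : x = a := by simpa using hh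
    obtain ⟨p, hp⟩ := walk_of_chain (y :: t) y b (List.isChain_cons_cons.1 hc).2 rfl
      (by rw [← hl]; exact (List.getLast?_cons_cons ..).symm)
    exact ⟨.cons (List.isChain_cons_cons.1 hc).1 p, by simp [hp]⟩

/-- For a multigraph `H` with at least `3` edges and edges `e₁, e₂` of `H`
(equivalently, vertices of `L(H)`), the line graph `L(H)` has a hamiltonian path
with endpoints `e₁, e₂` if and only if `H` has an internally dominating
`(e₁,e₂)`-trail. -/
theorem stmt5 {V E : Type*} [Fintype E] [DecidableEq E] (M : Multigraph V E)
    (hE : 3 ≤ Fintype.card E) (e₁ e₂ : E) :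
    (∃ p : (M.lineGraph).Walk e₁ e₂, p.IsHamiltonian) ↔ M.HasIDT e₁ e₂ := by
  classical
  constructor
  · rintro ⟨p, hp⟩
    have hchain : p.support.Chain' (M.lineGraph).Adj := p.isChain_adj_support
    have hnd : p.support.Nodup := List.nodup_iff_count_le_one.2 fun a => (hp a).le
    have hmem : ∀ e : E, e ∈ p.support := fun e =>
      List.count_pos_iff.1 (by rw [hp e]; norm_num)
    have hlen : p.support.length = Fintype.card E := by
      have h1 : p.support.toFinset = Finset.univ := Finset.eq_univ_iff_forall.2 fun e => by
        simpa using hmem e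
      rw [← List.toFinset_card_of_nodup hnd, h1, Finset.card_univ]
    have hsupp := p.support_eq_cons
    have htail : p.support.tail ≠ [] := by
      intro h0
      rw [hsupp, h0] at hlen
      simp at hlen
      omega
    obtain ⟨g, rest', hgr⟩ := List.exists_cons_of_ne_nil htail
    have hsupp2 : p.support = e₁ :: g :: rest' := by rw [hsupp, hgr]
    rw [hsupp2] at hchain
    have hadj : (M.lineGraph).Adj e₁ g := (List.isChain_cons_cons.1 hchain).1
    obtain ⟨hne, v, hv1, hv2⟩ := hadj
    obtain ⟨w, p', hsub, hlast, hdom⟩ :=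
      Multigraph.core_forward M rest' g v (List.isChain_cons_cons.1 hchain).2 hv2
    obtain ⟨u, hu⟩ := Sym2.mem_iff_exists.1 hv1
    have hu' : M.inc e₁ = s(u, v) := hu.trans (Sym2.eq_swap)
    have hp'ne : p'.edges ≠ [] := by
      intro h0
      rw [h0, List.getLast?_eq_getLast_of_ne_nil (List.cons_ne_nil g rest')] at hlast
      simp at hlast
    refine ⟨u, w, .cons e₁ hu' p', ?_, rfl, ?_, ?_⟩
    · -- trail
      show (e₁ :: p'.edges).Nodup
      exact (hsub.cons₂ e₁).nodup (hsupp2 ▸ hnd)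
    · show (e₁ :: p'.edges).getLast? = some e₂
      rw [Multigraph.glc hp'ne, hlast, ← List.getLast?_cons_cons,
        ← hsupp2, List.getLast?_eq_getLast_of_ne_nil p.support_ne_nil]
      simp
    · intro e
      have he := hmem e
      rw [hsupp2, List.mem_cons] at he
      have hint : (Multigraph.Walk.cons e₁ hu' p').interior = p'.support.dropLast := rfl
      rcases he with rfl | he'
      · exact ⟨v, hv1, hint ▸ p'.start_mem_dropLast hp'ne⟩
      · obtain ⟨x, hx1, hx2⟩ := hdom e he'
        exact ⟨x, hx1, hint ▸ hx2⟩
  · rintro ⟨u, v, p, htrail, hhead, hlast, hdom⟩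
    cases p with
    | nil => exact absurd hhead (by simp [Multigraph.Walk.edges])
    | @cons _ v₁ _ e h q =>
      obtain rfl : e₁ = e := by
        have : (e :: q.edges).head? = some e₁ := hhead
        simpa using this.symm
      have hnodupE : (e₁ :: q.edges).Nodup := htrail
      have hEne : Nonempty E := by
        have : 0 < Fintype.card E := by omega
        exact Fintype.card_pos_iff.1 this
      have hq : q.edges ≠ [] := by
        intro h0
        obtain ⟨e0⟩ := hEne
        obtain ⟨x, _, hx2⟩ := hdom e0
        have : (Multigraph.Walk.cons e₁ h q).interior = [] := by
          have hs := q.support_of_edges_nil h0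
          simp [Multigraph.Walk.interior, Multigraph.Walk.support, hs]
        rw [this] at hx2
        exact List.not_mem_nil hx2
      obtain ⟨X, hX⟩ : ∃ X, X = (Finset.univ.filter (fun f => f ∉ e₁ :: q.edges)).toList :=
        ⟨_, rfl⟩
      have hXmem : ∀ f : E, f ∈ X ↔ f ∉ e₁ :: q.edges := by
        intro f
        rw [hX, Finset.mem_toList, Finset.mem_filter]
        simp
      have hXnd : X.Nodup := hX ▸ Finset.nodup_toList _
      have hndall : ((e₁ :: q.edges) ++ X).Nodup := by
        rw [List.nodup_append]
        exact ⟨hnodupE, hXnd, fun a ha b hb hab => (hXmem b).1 hb (hab ▸ ha)⟩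
      have hdomX : ∀ f ∈ X, ∃ x, x ∈ M.inc f ∧ x ∈ q.support.dropLast := by
        intro f _
        obtain ⟨x, hx1, hx2⟩ := hdom f
        exact ⟨x, hx1, hx2⟩
      have hndqX : (q.edges ++ X).Nodup := by
        have : (q.edges ++ X).Sublist ((e₁ :: q.edges) ++ X) :=
          List.Sublist.append_right (List.sublist_cons_self _ _) X
        exact this.nodup hndall
      obtain ⟨Lq, hperm, hchain, hlastq, f, hheadq, hvf⟩ :=
        Multigraph.core_reverse M q X hq hdomX hndqX
      have hLqne : Lq ≠ [] := fun h0 => by rw [h0] at hheadq; simp at hheadq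
      have he₁notin : e₁ ∉ q.edges ++ X := by
        intro hmem
        rcases List.mem_append.1 hmem with h1 | h1
        · exact (List.nodup_cons.1 hnodupE).1 h1
        · exact (hXmem e₁).1 h1 (List.mem_cons_self)
      have hchainL : (e₁ :: Lq).Chain' (M.lineGraph).Adj := by
        unfold List.Chain'; rw [List.isChain_cons]
        refine ⟨?_, hchain⟩
        intro b hb
        obtain rfl : f = b := by rw [hheadq] at hb; simpa using hb
        have hfmem : f ∈ q.edges ++ X := by
          have hfLq : f ∈ Lq := by
            cases Lq with
            | nil => simp at hheadq
            | cons a t => exact (by simpa using hheadq : a = f) ▸ List.mem_cons_self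
          exact hperm.subset hfLq
        refine ⟨fun h' => he₁notin (h' ▸ hfmem), v₁, ?_, hvf⟩
        rw [h]
        exact Sym2.mem_mk_right _ _
      have hLperm : (e₁ :: Lq).Perm ((e₁ :: q.edges) ++ X) := hperm.cons e₁
      have hheadL : (e₁ :: Lq).head? = some e₁ := rfl
      have hlastL : (e₁ :: Lq).getLast? = some e₂ := by
        rw [Multigraph.glc hLqne, hlastq]
        have : (e₁ :: q.edges).getLast? = some e₂ := hlast
        rwa [Multigraph.glc hq] at this
      obtain ⟨pw, hpw⟩ := walk_of_chain (e₁ :: Lq) e₁ e₂ hchainL hheadL hlastL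
      refine ⟨pw, ?_⟩
      intro a
      rw [hpw]
      have hmemL : a ∈ e₁ :: Lq := by
        refine hLperm.mem_iff.2 ?_
        by_cases hmem : a ∈ e₁ :: q.edges
        · exact List.mem_append_left _ hmem
        · exact List.mem_append_right _ ((hXmem a).2 hmem)
      exact List.count_eq_one_of_mem (hLperm.nodup_iff.2 hndall) hmemL
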